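/- Let h be an invertible formal power series (order 1, unit leading coefficient), and define its pseudo-inverse ĥ = (-z)∘h̄∘(-z) where h̄ is the compositional inverse. If (g,f) is a Riordan pseudo-involution, then (g∘h, ĥ∘f∘h) is also a pseudo-involution. -/

import Mathlib

open PowerSeries

/-- Composition `f ∘ g` of formal power series (meaningful when the constant
coefficient of `g` is zero). -/
noncomputable def comp (f g : PowerSeries ℚ) : PowerSeries ℚ :=
  PowerSeries.mk fun n =>
    ∑ i ∈ Finset.range (n + 1), (PowerSeries.coeff (R := ℚ) i f) * (PowerSeries.coeff (R := ℚ) n (g ^ i))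

/-- A formal power series `f` is pseudo-involutory when its compositional
inverse is `-f(-z)`. -/
def PseudoInvolutory (f : PowerSeries ℚ) : Prop :=
  comp f (-(comp f (-X))) = X ∧ comp (-(comp f (-X))) f = X

namespace CompAux

lemma coeff_comp (a b : PowerSeries ℚ) (n : ℕ) :
    PowerSeries.coeff (R := ℚ) n (comp a b) =
      ∑ i ∈ Finset.range (n + 1), (PowerSeries.coeff (R := ℚ) i a) * (PowerSeries.coeff (R := ℚ) n (b ^ i)) := by
  simp [comp]

lemma constantCoeff_comp (a b : PowerSeries ℚ) :
    PowerSeries.constantCoeff (R := ℚ) (comp a b) = PowerSeries.constantCoeff (R := ℚ) a := by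
  rw [← PowerSeries.coeff_zero_eq_constantCoeff_apply, coeff_comp]
  simp

lemma coeff_pow_eq_zero {b : PowerSeries ℚ} (hb : PowerSeries.constantCoeff (R := ℚ) b = 0)
    {i n : ℕ} (hn : n < i) : PowerSeries.coeff (R := ℚ) n (b ^ i) = 0 := by
  have hd : (X : PowerSeries ℚ) ^ i ∣ b ^ i :=
    pow_dvd_pow_of_dvd (PowerSeries.X_dvd_iff.mpr hb) i
  exact PowerSeries.X_pow_dvd_iff.mp hd n hn

lemma neg_comp (a b : PowerSeries ℚ) : comp (-a) b = -(comp a b) := by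
  ext n
  simp [coeff_comp, Finset.sum_neg_distrib]

lemma one_comp (b : PowerSeries ℚ) : comp 1 b = 1 := by
  ext n
  rw [coeff_comp]
  rw [Finset.sum_eq_single 0]
  · simp
  · intro i _ hi
    simp [PowerSeries.coeff_one, hi]
  · intro hn
    simp at hn

lemma comp_X (a : PowerSeries ℚ) : comp a X = a := by
  ext n
  rw [coeff_comp]
  rw [Finset.sum_eq_single n]
  · simp [PowerSeries.coeff_X_pow]
  · intro i _ hi
    simp [PowerSeries.coeff_X_pow, (Ne.symm hi)]
  · intro hn
    simp at hn

lemma X_comp {b : PowerSeries ℚ} (hb : PowerSeries.constantCoeff (R := ℚ) b = 0) :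
    comp X b = b := by
  ext n
  rw [coeff_comp]
  rw [Finset.sum_eq_single 1]
  · simp
  · intro i _ hi
    simp [PowerSeries.coeff_X, hi]
  · intro hn
    simp only [Finset.mem_range, not_lt, Nat.lt_succ_iff] at hn
    interval_cases n
    simpa using hb

lemma coeff_comp_eval (a c : PowerSeries ℚ) (n : ℕ) :
    PowerSeries.coeff (R := ℚ) n (comp a c) =
      PowerSeries.coeff (R := ℚ) n ((PowerSeries.trunc (n + 1) a).eval₂ (PowerSeries.C (R := ℚ)) c) := by
  rw [PowerSeries.eval₂_trunc_eq_sum_range, map_sum, coeff_comp]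
  refine Finset.sum_congr rfl fun i _ => ?_
  rw [PowerSeries.coeff_C_mul]

lemma coeff_eval₂_congr {c : PowerSeries ℚ} (hc : PowerSeries.constantCoeff (R := ℚ) c = 0)
    {n : ℕ} {P Q : Polynomial ℚ} (hPQ : ∀ d ≤ n, P.coeff d = Q.coeff d) :
    PowerSeries.coeff (R := ℚ) n (P.eval₂ (PowerSeries.C (R := ℚ)) c) =
      PowerSeries.coeff (R := ℚ) n (Q.eval₂ (PowerSeries.C (R := ℚ)) c) := by
  have hdvd : (Polynomial.X : Polynomial ℚ) ^ (n + 1) ∣ Q - P := by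
    rw [Polynomial.X_pow_dvd_iff]
    intro d hd
    rw [Polynomial.coeff_sub, hPQ d (Nat.lt_succ_iff.mp hd), sub_self]
  obtain ⟨R, hR⟩ := hdvd
  have hQ : Q = P + Polynomial.X ^ (n + 1) * R := by
    rw [← hR]; ring
  rw [hQ, Polynomial.eval₂_add, Polynomial.eval₂_mul, Polynomial.eval₂_X_pow, map_add]
  have hz : PowerSeries.coeff (R := ℚ) n (c ^ (n + 1) * (R.eval₂ (PowerSeries.C (R := ℚ)) c)) = 0 := by
    have hd : (X : PowerSeries ℚ) ^ (n + 1) ∣ c ^ (n + 1) * R.eval₂ (PowerSeries.C (R := ℚ)) c :=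
      Dvd.dvd.mul_right (pow_dvd_pow_of_dvd (PowerSeries.X_dvd_iff.mpr hc) _) _
    exact PowerSeries.X_pow_dvd_iff.mp hd n (Nat.lt_succ_self n)
  rw [hz, add_zero]

lemma coeff_comp_of_agree {a c : PowerSeries ℚ} (hc : PowerSeries.constantCoeff (R := ℚ) c = 0)
    {n : ℕ} {P : Polynomial ℚ} (hP : ∀ d ≤ n, P.coeff d = PowerSeries.coeff (R := ℚ) d a) :
    PowerSeries.coeff (R := ℚ) n (comp a c) = PowerSeries.coeff (R := ℚ) n (P.eval₂ (PowerSeries.C (R := ℚ)) c) := by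
  rw [coeff_comp_eval]
  refine coeff_eval₂_congr hc fun d hd => ?_
  rw [PowerSeries.coeff_trunc, if_pos (Nat.lt_succ_of_le hd), hP d hd]

lemma trunc_coeff_agree (a : PowerSeries ℚ) (n : ℕ) :
    ∀ d ≤ n, (PowerSeries.trunc (n + 1) a).coeff d = PowerSeries.coeff (R := ℚ) d a := by
  intro d hd
  rw [PowerSeries.coeff_trunc, if_pos (Nat.lt_succ_of_le hd)]

lemma mul_comp {c : PowerSeries ℚ} (hc : PowerSeries.constantCoeff (R := ℚ) c = 0)
    (a b : PowerSeries ℚ) : comp (a * b) c = comp a c * comp b c := by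
  ext n
  set A := PowerSeries.trunc (n + 1) a with hA
  set B := PowerSeries.trunc (n + 1) b with hB
  have hAB : ∀ d ≤ n, (A * B).coeff d = PowerSeries.coeff (R := ℚ) d (a * b) := by
    intro d hd
    rw [Polynomial.coeff_mul, PowerSeries.coeff_mul]
    refine Finset.sum_congr rfl fun p hp => ?_
    rw [Finset.HasAntidiagonal.mem_antidiagonal] at hp
    have h1 : p.1 ≤ n := le_trans (le_trans (Nat.le_add_right _ _) hp.le) hd
    have h2 : p.2 ≤ n := le_trans (le_trans (Nat.le_add_left _ _) hp.le) hd
    rw [trunc_coeff_agree a n p.1 h1, trunc_coeff_agree b n p.2 h2]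
  rw [coeff_comp_of_agree hc hAB, Polynomial.eval₂_mul, PowerSeries.coeff_mul,
    PowerSeries.coeff_mul]
  refine Finset.sum_congr rfl fun p hp => ?_
  rw [Finset.HasAntidiagonal.mem_antidiagonal] at hp
  have h1 : p.1 ≤ n := le_trans (Nat.le_add_right _ _) hp.le
  have h2 : p.2 ≤ n := le_trans (Nat.le_add_left _ _) hp.le
  rw [coeff_comp_of_agree hc (fun d hd => trunc_coeff_agree a n d (le_trans hd h1)),
    coeff_comp_of_agree hc (fun d hd => trunc_coeff_agree b n d (le_trans hd h2))]

lemma pow_comp {c : PowerSeries ℚ} (hc : PowerSeries.constantCoeff (R := ℚ) c = 0)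
    (b : PowerSeries ℚ) (i : ℕ) : comp (b ^ i) c = (comp b c) ^ i := by
  induction i with
  | zero => simpa using one_comp c
  | succ i ih => rw [pow_succ, pow_succ, mul_comp hc, ih]

lemma comp_assoc {a b c : PowerSeries ℚ} (hb : PowerSeries.constantCoeff (R := ℚ) b = 0)
    (hc : PowerSeries.constantCoeff (R := ℚ) c = 0) :
    comp (comp a b) c = comp a (comp b c) := by
  ext n
  rw [coeff_comp, coeff_comp]
  have RHS : ∀ i, PowerSeries.coeff (R := ℚ) n ((comp b c) ^ i) =
      ∑ k ∈ Finset.range (n + 1), PowerSeries.coeff (R := ℚ) k (b ^ i) * PowerSeries.coeff (R := ℚ) n (c ^ k) := by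
    intro i
    rw [← pow_comp hc, coeff_comp]
  simp_rw [RHS, coeff_comp, Finset.mul_sum, Finset.sum_mul]
  rw [Finset.sum_comm]
  refine Finset.sum_congr rfl fun k hk => ?_
  rw [Finset.mem_range, Nat.lt_succ_iff] at hk
  rw [← Finset.sum_subset (Finset.range_subset_range.mpr (Nat.succ_le_succ hk))
    (fun i _ hik => ?_)]
  · refine Finset.sum_congr rfl fun i _ => by ring
  · rw [Finset.mem_range, Nat.lt_succ_iff, not_le] at hik
    rw [coeff_pow_eq_zero hb hik]
    ring

end CompAux

open CompAux

/-- Pseudo-conjugation: let `h` be an invertible power series (order 1, unit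
leading coefficient) with compositional inverse `hbar`, and let
`ĥ = (-z)∘hbar∘(-z)` be its pseudo-inverse.  If `(g, f)` is a Riordan
pseudo-involution (i.e. `f` is pseudo-involutory and `g∘(-f) = 1/g`), then
`(g∘h, ĥ∘f∘h)` is also a pseudo-involution. -/
theorem pseudo_conjugation (g f h hbar : PowerSeries ℚ)
    (hg0 : PowerSeries.constantCoeff (R := ℚ) g = 1)
    (hh0 : PowerSeries.constantCoeff (R := ℚ) h = 0)
    (hh1 : PowerSeries.coeff (R := ℚ) 1 h ≠ 0)
    (hinv1 : comp h hbar = X) (hinv2 : comp hbar h = X)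
    (hfpi : PseudoInvolutory f)
    (hgf : comp g (-f) = g⁻¹) :
    PseudoInvolutory (comp (-(comp hbar (-X))) (comp f h)) ∧
      comp (comp g h) (-(comp (-(comp hbar (-X))) (comp f h))) = (comp g h)⁻¹ := by
  obtain ⟨hfpi1, hfpi2⟩ := hfpi
  have hX0 : PowerSeries.constantCoeff (R := ℚ) (-X : PowerSeries ℚ) = 0 := by simp
  have hbar0 : PowerSeries.constantCoeff (R := ℚ) hbar = 0 := by
    have := congrArg (PowerSeries.constantCoeff (R := ℚ)) hinv2
    rwa [constantCoeff_comp, PowerSeries.constantCoeff_X] at this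
  have hf0 : PowerSeries.constantCoeff (R := ℚ) f = 0 := by
    have := congrArg (PowerSeries.constantCoeff (R := ℚ)) hfpi1
    rwa [constantCoeff_comp, PowerSeries.constantCoeff_X] at this
  -- notation
  set fhat : PowerSeries ℚ := -(comp f (-X)) with hfhat
  set H : PowerSeries ℚ := -(comp hbar (-X)) with hH
  set hm : PowerSeries ℚ := -(comp h (-X)) with hhm
  set F : PowerSeries ℚ := comp f h with hF
  have hfhat0 : PowerSeries.constantCoeff (R := ℚ) fhat = 0 := by
    rw [hfhat, map_neg, constantCoeff_comp, hf0, neg_zero]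
  have hH0 : PowerSeries.constantCoeff (R := ℚ) H = 0 := by
    rw [hH, map_neg, constantCoeff_comp, hbar0, neg_zero]
  have hhm0 : PowerSeries.constantCoeff (R := ℚ) hm = 0 := by
    rw [hhm, map_neg, constantCoeff_comp, hh0, neg_zero]
  have hF0 : PowerSeries.constantCoeff (R := ℚ) F = 0 := by
    rw [hF, constantCoeff_comp, hf0]
  -- comp (-X) z = -z for constant coeff zero z
  have negX_comp : ∀ z : PowerSeries ℚ, PowerSeries.constantCoeff (R := ℚ) z = 0 →
      comp (-X) z = -z := by
    intro z hz
    rw [neg_comp, X_comp hz]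
  -- generic: pseudo-conjugates compose to X
  have key : ∀ p q : PowerSeries ℚ, PowerSeries.constantCoeff (R := ℚ) p = 0 →
      PowerSeries.constantCoeff (R := ℚ) q = 0 → comp p q = X →
      comp (-(comp p (-X))) (-(comp q (-X))) = X := by
    intro p q hp hq hpq
    have hq' : PowerSeries.constantCoeff (R := ℚ) (-(comp q (-X))) = 0 := by
      rw [map_neg, constantCoeff_comp, hq, neg_zero]
    rw [neg_comp, comp_assoc hX0 hq', negX_comp _ hq', neg_neg,
      ← comp_assoc hq hX0, hpq, X_comp hX0, neg_neg]
  have hHhm : comp H hm = X := key hbar h hbar0 hh0 hinv2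
  have hhmH : comp hm H = X := key h hbar hh0 hbar0 hinv1
  -- nf and its pseudo-inverse
  set nf : PowerSeries ℚ := comp H F with hnf
  have hnf0 : PowerSeries.constantCoeff (R := ℚ) nf = 0 := by
    rw [hnf, constantCoeff_comp, hH0]
  have hnfhat : -(comp nf (-X)) = comp hbar (comp fhat hm) := by
    have h1 : comp nf (-X) = comp H (comp F (-X)) := by
      rw [hnf, comp_assoc hF0 hX0]
    have hFX0 : PowerSeries.constantCoeff (R := ℚ) (comp F (-X)) = 0 := by
      rw [constantCoeff_comp, hF0]
    have h2 : comp H (comp F (-X)) = -(comp hbar (-(comp F (-X)))) := by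
      rw [hH, neg_comp, comp_assoc hX0 hFX0, negX_comp _ hFX0]
    have h3 : comp fhat hm = -(comp F (-X)) := by
      rw [hfhat, neg_comp, comp_assoc hX0 hhm0, negX_comp _ hhm0, hhm, neg_neg,
        hF, comp_assoc hh0 hX0]
    rw [h1, h2, neg_neg, h3]
  have hfhathm0 : PowerSeries.constantCoeff (R := ℚ) (comp fhat hm) = 0 := by
    rw [constantCoeff_comp, hfhat0]
  have hchbarW0 : PowerSeries.constantCoeff (R := ℚ) (comp hbar (comp fhat hm)) = 0 := by
    rw [constantCoeff_comp, hbar0]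
  -- goal 1a : comp nf nfhat = X
  have g1a : comp nf (-(comp nf (-X))) = X := by
    rw [hnfhat, hnf, comp_assoc hF0 hchbarW0,
      ← comp_assoc hbar0 hfhathm0 (a := F),
      hF, comp_assoc hh0 hbar0, hinv1, comp_X,
      ← comp_assoc hfhat0 hhm0, hfpi1, X_comp hhm0, hHhm]
  have g1b : comp (-(comp nf (-X))) nf = X := by
    have hnfhat' : -(comp nf (-X)) = comp (comp hbar fhat) hm := by
      rw [hnfhat, comp_assoc hfhat0 hhm0]
    rw [hnfhat', comp_assoc hhm0 hnf0, hnf, ← comp_assoc hH0 hF0, hhmH, X_comp hF0,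
      hF,
      comp_assoc hfhat0 (show PowerSeries.constantCoeff (R := ℚ) (comp f h) = 0 by
        rw [constantCoeff_comp, hf0]),
      ← comp_assoc hf0 hh0, hfpi2, X_comp hh0, hinv2]
  refine ⟨⟨g1a, g1b⟩, ?_⟩
  -- goal 2
  have hnegnf : -nf = comp hbar (-F) := by
    rw [hnf, hH, neg_comp, neg_neg, comp_assoc hX0 hF0, negX_comp _ hF0]
  have hnegF0 : PowerSeries.constantCoeff (R := ℚ) (-F) = 0 := by
    rw [map_neg, hF0, neg_zero]
  have hcomp2 : comp (comp g h) (-nf) = comp g⁻¹ h := by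
    rw [hnegnf]
    have h1 : PowerSeries.constantCoeff (R := ℚ) (comp hbar (-F)) = 0 := by
      rw [constantCoeff_comp, hbar0]
    rw [comp_assoc hh0 h1, ← comp_assoc hbar0 hnegF0, hinv1, X_comp hnegF0,
      hF, ← neg_comp, ← comp_assoc (by rw [map_neg, hf0, neg_zero]) hh0, hgf]
  rw [hcomp2]
  have hgh0 : PowerSeries.constantCoeff (R := ℚ) (comp g h) = 1 := by
    rw [constantCoeff_comp, hg0]
  have hgg : g⁻¹ * g = 1 := by
    rw [mul_comm]
    exact PowerSeries.mul_inv_cancel g (by rw [hg0]; exact one_ne_zero)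
  have hmul : comp g⁻¹ h * comp g h = 1 := by
    rw [← mul_comp hh0, hgg, one_comp]
  exact (PowerSeries.eq_inv_iff_mul_eq_one (by rw [hgh0]; exact one_ne_zero)).mpr hmul
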